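/- Assume p_{i+} > 0 for every row i, and let t be an integer with 1 ≤ t < c such that S_k(p_{+·}) ≠ 1 for every k with 1 ≤ k ≤ t. Then λ^{K(k)}_{Y|X} = 0 for all k = 1, …, t if and only if the quasi-independence condition S_k(p_{i·}) = p_{i+} · S_k(p_{+·}) holds for every row i and every k with 1 ≤ k ≤ t (equivalently, the k-th largest entry of each row i equals p_{i+} times the k-th largest column marginal for all k ≤ t). -/
import Mathlib


/-- `Smax t q` : the maximum, over subsets `T` of the index type with `T.card = t`,
of `∑ j ∈ T, q j` (i.e. the sum of the `t` largest entries of `q`). -/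
noncomputable def Smax {n : ℕ} (t : ℕ) (q : Fin n → ℝ) : ℝ :=
  sSup ((fun T : Finset (Fin n) => ∑ j ∈ T, q j) '' {T : Finset (Fin n) | T.card = t})

/-- Row marginals `p_{i+}`. -/
noncomputable def rowMarg {r c : ℕ} (p : Fin r → Fin c → ℝ) : Fin r → ℝ :=
  fun i => ∑ j, p i j

/-- Column marginals `p_{+j}`. -/
noncomputable def colMarg {r c : ℕ} (p : Fin r → Fin c → ℝ) : Fin c → ℝ :=
  fun j => ∑ i, p i j

/-- The measure `λ^{(t)}_{Y|X}` based on multi-categorical proportional reduction in error. -/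
noncomputable def lambdaT {r c : ℕ} (t : ℕ) (p : Fin r → Fin c → ℝ) : ℝ :=
  (∑ i, Smax t (p i) - Smax t (colMarg p)) / (1 - Smax t (colMarg p))

/-- The alternative measure `λ^{K(t)}_{Y|X}`. -/
noncomputable def lambdaKT {r c : ℕ} (t : ℕ) (p : Fin r → Fin c → ℝ) : ℝ :=
  (Real.sqrt (∑ i, (Smax t (p i)) ^ 2 / rowMarg p i) - Smax t (colMarg p)) /
    (1 - Smax t (colMarg p))

lemma smax_bddAbove {n k : ℕ} (q : Fin n → ℝ) :
    BddAbove ((fun T : Finset (Fin n) => ∑ j ∈ T, q j) '' {T : Finset (Fin n) | T.card = k}) :=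
  ((Set.toFinite _).image _).bddAbove

lemma le_smax {n k : ℕ} (q : Fin n → ℝ) {T : Finset (Fin n)} (hT : T.card = k) :
    ∑ j ∈ T, q j ≤ Smax k q :=
  le_csSup (smax_bddAbove q) ⟨T, hT, rfl⟩

lemma smax_exists {n k : ℕ} (hk : k ≤ n) (q : Fin n → ℝ) :
    ∃ T : Finset (Fin n), T.card = k ∧ Smax k q = ∑ j ∈ T, q j := by
  obtain ⟨T, -, hT⟩ := Finset.exists_subset_card_eq
    (show k ≤ (Finset.univ : Finset (Fin n)).card by simpa using hk)
  have hne : ((fun T : Finset (Fin n) => ∑ j ∈ T, q j) ''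
      {T : Finset (Fin n) | T.card = k}).Nonempty := ⟨_, T, hT, rfl⟩
  obtain ⟨T', hT', hval⟩ := hne.csSup_mem ((Set.toFinite _).image _)
  exact ⟨T', hT', hval.symm⟩

lemma smax_nonneg {n k : ℕ} (hk : k ≤ n) (q : Fin n → ℝ) (hq : ∀ j, 0 ≤ q j) :
    0 ≤ Smax k q := by
  obtain ⟨T, -, hT⟩ := Finset.exists_subset_card_eq
    (show k ≤ (Finset.univ : Finset (Fin n)).card by simpa using hk)
  exact le_trans (Finset.sum_nonneg fun j _ => hq j) (le_smax q hT)

lemma smax_col_le {r c k : ℕ} (hk : k ≤ c) (p : Fin r → Fin c → ℝ) :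
    Smax k (colMarg p) ≤ ∑ i, Smax k (p i) := by
  obtain ⟨T, hT, hval⟩ := smax_exists hk (colMarg p)
  rw [hval]
  have : ∑ j ∈ T, colMarg p j = ∑ i, ∑ j ∈ T, p i j := by
    simp only [colMarg]; rw [Finset.sum_comm]
  rw [this]
  exact Finset.sum_le_sum fun i _ => le_smax (p i) hT

/-- `λ^{K(k)}_{Y|X} = 0` for all `1 ≤ k ≤ t` iff quasi-independence
holds at all levels `1 ≤ k ≤ t`. -/
theorem lambdaKT_zero_iff_quasiIndep
    (r c : ℕ) (hr : 2 ≤ r) (hc : 2 ≤ c)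
    (p : Fin r → Fin c → ℝ) (hp : ∀ i j, 0 ≤ p i j)
    (hsum : ∑ i, ∑ j, p i j = 1)
    (hpos : ∀ i, 0 < rowMarg p i)
    (t : ℕ) (ht1 : 1 ≤ t) (htc : t < c)
    (hS : ∀ k, 1 ≤ k → k ≤ t → Smax k (colMarg p) ≠ 1) :
    (∀ k, 1 ≤ k → k ≤ t → lambdaKT k p = 0) ↔
      (∀ i, ∀ k, 1 ≤ k → k ≤ t →
        Smax k (p i) = rowMarg p i * Smax k (colMarg p)) := by
  have hrowsum : ∑ i, rowMarg p i = 1 := hsum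
  constructor
  · intro h i k hk1 hkt
    have hkc : k ≤ c := le_of_lt (lt_of_le_of_lt hkt htc)
    set C := Smax k (colMarg p) with hCdef
    set Q := ∑ i, (Smax k (p i)) ^ 2 / rowMarg p i with hQdef
    have hne : (1 : ℝ) - C ≠ 0 := sub_ne_zero.mpr (fun h' => hS k hk1 hkt h'.symm)
    have hz := h k hk1 hkt
    unfold lambdaKT at hz
    have hnum : Real.sqrt Q - C = 0 := by
      rcases div_eq_zero_iff.mp hz with h' | h'
      · exact h'
      · exact absurd h' hne
    have hsqrt : Real.sqrt Q = C := sub_eq_zero.mp hnum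
    have hC0 : 0 ≤ C := hsqrt ▸ Real.sqrt_nonneg Q
    have hQ0 : 0 ≤ Q := Finset.sum_nonneg fun i _ =>
      div_nonneg (sq_nonneg _) (hpos i).le
    have hQC : Q = C ^ 2 := by
      rw [← hsqrt, Real.sq_sqrt hQ0]
    have hsumS : C ≤ ∑ i, Smax k (p i) := smax_col_le hkc p
    -- the quadratic form
    have hterm : ∀ i, rowMarg p i * (Smax k (p i) / rowMarg p i - C) ^ 2
        = (Smax k (p i)) ^ 2 / rowMarg p i - 2 * C * Smax k (p i) + C ^ 2 * rowMarg p i := by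
      intro i
      have hw : rowMarg p i ≠ 0 := (hpos i).ne'
      field_simp
      ring
    have hE : ∑ i, rowMarg p i * (Smax k (p i) / rowMarg p i - C) ^ 2
        = 2 * C * (C - ∑ i, Smax k (p i)) := by
      simp only [hterm]
      rw [Finset.sum_add_distrib, Finset.sum_sub_distrib, ← hQdef,
        ← Finset.mul_sum, ← Finset.mul_sum, hrowsum, hQC]
      ring
    have hE0 : ∀ i ∈ Finset.univ, 0 ≤ rowMarg p i * (Smax k (p i) / rowMarg p i - C) ^ 2 :=
      fun i _ => mul_nonneg (hpos i).le (sq_nonneg _)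
    have hEle : ∑ i, rowMarg p i * (Smax k (p i) / rowMarg p i - C) ^ 2 ≤ 0 := by
      rw [hE]
      exact mul_nonpos_of_nonneg_of_nonpos (by positivity) (sub_nonpos.mpr hsumS)
    have hEzero : ∑ i, rowMarg p i * (Smax k (p i) / rowMarg p i - C) ^ 2 = 0 :=
      le_antisymm hEle (Finset.sum_nonneg hE0)
    have := (Finset.sum_eq_zero_iff_of_nonneg hE0).mp hEzero i (Finset.mem_univ i)
    have hsq : (Smax k (p i) / rowMarg p i - C) ^ 2 = 0 := by
      rcases mul_eq_zero.mp this with h' | h'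
      · exact absurd h' (hpos i).ne'
      · exact h'
    have hdiv := sub_eq_zero.mp (pow_eq_zero_iff (n := 2) (by norm_num) |>.mp hsq)
    have := (div_eq_iff (hpos i).ne').mp hdiv
    rw [this, mul_comm]
  · intro h k hk1 hkt
    have hkc : k ≤ c := le_of_lt (lt_of_le_of_lt hkt htc)
    set C := Smax k (colMarg p) with hCdef
    have hC0 : 0 ≤ C := smax_nonneg hkc (colMarg p)
      (fun j => Finset.sum_nonneg fun i _ => hp i j)
    have hQ : ∑ i, (Smax k (p i)) ^ 2 / rowMarg p i = C ^ 2 := by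
      have : ∀ i ∈ Finset.univ, (Smax k (p i)) ^ 2 / rowMarg p i = C ^ 2 * rowMarg p i := by
        intro i _
        rw [h i k hk1 hkt]
        have hw : rowMarg p i ≠ 0 := (hpos i).ne'
        field_simp
        ring
      rw [Finset.sum_congr rfl this, ← Finset.mul_sum, hrowsum, mul_one]
    unfold lambdaKT
    rw [hQ, Real.sqrt_sq hC0, ← hCdef, sub_self, zero_div]
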